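/- Let (X_t) be a non-negative strictly stationary sequence that is regularly varying with index α > 0 and spectral tail process (Θ_t), and assume the anti-clustering condition holds for u_n = x a_n for all x > 0. Set Y_t = Y Θ_t where Y is Pareto(α) independent of (Θ_t). Then Y_t → 0 almost surely as t → +∞; equivalently, Θ_t → 0 almost surely as t → +∞. -/

import Mathlib

open MeasureTheory ProbabilityTheory Filter Topology

noncomputable section

variable {Ω : Type*} [MeasurableSpace Ω]

/-- `blockMax X a b ω = max_{a ≤ i ≤ b} X i ω` (junk value `0` if `b < a`). -/
def blockMax (X : ℤ → Ω → ℝ) (a b : ℤ) (ω : Ω) : ℝ :=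
  ⨆ i : Finset.Icc a b, X i ω

/-- Conditional probability `P(B | A)` as a real number. -/
def condProb (μ : Measure Ω) (A B : Set Ω) : ℝ :=
  (ProbabilityTheory.cond μ A B).toReal

/-- Leadbetter's block quantity `θ_n = r_n P(X > u_n) / P(M_{r_n} > u_n)`. -/
def thetaBlock (μ : Measure Ω) (X : ℤ → Ω → ℝ) (u : ℕ → ℝ) (r : ℕ → ℕ) (n : ℕ) : ℝ :=
  (r n : ℝ) * (μ {ω | X 0 ω > u n}).toReal
    / (μ {ω | blockMax X 1 (r n) ω > u n}).toReal

/-- The anti-clustering condition: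
`lim_{k→∞} limsup_{n→∞} P(M_{k,r_n} > u_n ∣ X_0 > u_n) = 0`. -/
def AntiClustering (μ : Measure Ω) (X : ℤ → Ω → ℝ) (u : ℕ → ℝ) (r : ℕ → ℕ) : Prop :=
  Tendsto (fun k : ℕ =>
      limsup (fun n : ℕ =>
        condProb μ {ω | X 0 ω > u n} {ω | blockMax X k (r n) ω > u n}) atTop)
    atTop (𝓝 0)

/-- The mixing condition `P(M_n ≤ u_n) − (P(M_{r_n} ≤ u_n))^{k_n} → 0`, `k_n = [n/r_n]`. -/
def MixingMax (μ : Measure Ω) (X : ℤ → Ω → ℝ) (u : ℕ → ℝ) (r : ℕ → ℕ) : Prop :=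
  Tendsto (fun n : ℕ =>
      (μ {ω | blockMax X 1 n ω ≤ u n}).toReal
        - (μ {ω | blockMax X 1 (r n) ω ≤ u n}).toReal ^ (n / r n)) atTop (𝓝 0)

/-- Strict stationarity of a `ℤ`-indexed real sequence. -/
def IsStationarySeq (μ : Measure Ω) (X : ℤ → Ω → ℝ) : Prop :=
  ∀ k : ℤ, Measure.map (fun ω (t : ℤ) => X (t + k) ω) μ
    = Measure.map (fun ω (t : ℤ) => X t ω) μ

/-- The right endpoint `x_F` of the marginal distribution of `X_0`, as an extended real. -/
def rightEndpoint (μ : Measure Ω) (X : ℤ → Ω → ℝ) : EReal :=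
  sSup {y : EReal | ∃ s : ℝ, y = (s : EReal) ∧ 0 < μ {ω | X 0 ω > s}}

/-- `(X_t)` has extremal index `θ`: for every `τ > 0` there are thresholds `u_n(τ)` with
`n P(X_0 > u_n(τ)) → τ` and `P(M_n ≤ u_n(τ)) → e^{−τθ}`. -/
def HasExtremalIndex (μ : Measure Ω) (X : ℤ → Ω → ℝ) (θ : ℝ) : Prop :=
  ∀ τ : ℝ, 0 < τ → ∃ u : ℕ → ℝ,
    Tendsto (fun n : ℕ => (n : ℝ) * (μ {ω | X 0 ω > u n}).toReal) atTop (𝓝 τ) ∧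
    Tendsto (fun n : ℕ => (μ {ω | blockMax X 1 n ω ≤ u n}).toReal) atTop
      (𝓝 (Real.exp (-(τ * θ))))

/-- `(X_t)` is a regularly varying stationary sequence with index `α`, spectral tail process
`(Θ_t)` and Pareto(α) variable `Y` (defined on a possibly different probability space `Ω'`):
for every `h ≥ 0`, the conditional law of `(X_t/x)_{|t|≤h}` given `|X_0| > x` converges weakly,
as `x → ∞`, to the law of `(Y Θ_t)_{|t|≤h}`, where `|Θ_0| = 1` a.s., `Y` is Pareto(α) and
`Y` is independent of `(Θ_t)`. -/
structure IsSpectralTail (μ : Measure Ω) {Ω' : Type*} [MeasurableSpace Ω'] (ν : Measure Ω')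
    (X : ℤ → Ω → ℝ) (α : ℝ) (Θ : ℤ → Ω' → ℝ) (Y : Ω' → ℝ) : Prop where
  alpha_pos : 0 < α
  theta_zero : ∀ᵐ ω ∂ν, |Θ 0 ω| = 1
  pareto_ge_one : ∀ᵐ ω ∂ν, 1 ≤ Y ω
  pareto_tail : ∀ y : ℝ, 1 < y → (ν {ω | Y ω > y}).toReal = y ^ (-α)
  indep : IndepFun Y (fun ω (t : ℤ) => Θ t ω) ν
  fdd_conv : ∀ h : ℕ, ∀ f : BoundedContinuousFunction (Fin (2 * h + 1) → ℝ) ℝ,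
    Tendsto (fun x : ℝ =>
        ∫ ω, f (fun i => X (((i : ℕ) : ℤ) - (h : ℤ)) ω / x)
          ∂(ProbabilityTheory.cond μ {ω | |X 0 ω| > x}))
      atTop
      (𝓝 (∫ ω, f (fun i => Y ω * Θ (((i : ℕ) : ℤ) - (h : ℤ)) ω) ∂ν))


section MyAux


/-- clamp to [0,1] -/
def phi (s : ℝ) : ℝ := max 0 (min 1 s)

lemma phi_nonneg (s : ℝ) : 0 ≤ phi s := le_max_left _ _
lemma phi_le_one (s : ℝ) : phi s ≤ 1 := max_le zero_le_one (min_le_left _ _)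
lemma phi_continuous : Continuous phi :=
  continuous_const.max (continuous_const.min continuous_id)
lemma phi_eq_one (s : ℝ) (h : 1 ≤ s) : phi s = 1 := by
  simp [phi, min_eq_left h]
lemma phi_eq_zero (s : ℝ) (h : s ≤ 0) : phi s = 0 := by
  simp [phi, min_eq_right (h.trans zero_le_one), h]
lemma lt_of_phi_pos {s : ℝ} (h : 0 < phi s) : 0 < s := by
  by_contra hs
  rw [phi_eq_zero s (not_lt.1 hs)] at h; exact lt_irrefl 0 h

lemma mem_Icc01_bump {d : ℕ} (T : Finset (Fin d)) (c δ : ℝ) (v : Fin d → ℝ) :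
    min 1 (∑ i ∈ T, phi ((v i - c) / δ)) ∈ Set.Icc (0:ℝ) 1 :=
  ⟨le_min zero_le_one (Finset.sum_nonneg fun i _ => phi_nonneg _), min_le_left _ _⟩

/-- bump function: 1 if some coordinate in `T` is `≥ c + δ`, 0 if all coordinates in `T`
are `≤ c`. -/
def bump (d : ℕ) (T : Finset (Fin d)) (c δ : ℝ) :
    BoundedContinuousFunction (Fin d → ℝ) ℝ :=
  ⟨⟨fun v => min 1 (∑ i ∈ T, phi ((v i - c) / δ)),
    continuous_const.min (continuous_finset_sum T fun i _ =>
      phi_continuous.comp (by fun_prop))⟩,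
    ⟨1, fun v w => Real.dist_le_of_mem_Icc_01 (mem_Icc01_bump T c δ v) (mem_Icc01_bump T c δ w)⟩⟩

lemma bump_apply {d : ℕ} (T : Finset (Fin d)) (c δ : ℝ) (v : Fin d → ℝ) :
    bump d T c δ v = min 1 (∑ i ∈ T, phi ((v i - c) / δ)) := rfl

lemma bump_nonneg {d : ℕ} (T : Finset (Fin d)) (c δ : ℝ) (v : Fin d → ℝ) :
    0 ≤ bump d T c δ v := (mem_Icc01_bump T c δ v).1

lemma bump_le_one {d : ℕ} (T : Finset (Fin d)) (c δ : ℝ) (v : Fin d → ℝ) :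
    bump d T c δ v ≤ 1 := (mem_Icc01_bump T c δ v).2

lemma bump_eq_one {d : ℕ} (T : Finset (Fin d)) (c δ : ℝ) (hδ : 0 < δ) (v : Fin d → ℝ)
    {i : Fin d} (hi : i ∈ T) (hv : c + δ ≤ v i) : bump d T c δ v = 1 := by
  rw [bump_apply, min_eq_left]
  calc (1:ℝ) = phi ((v i - c)/δ) := by
        rw [phi_eq_one]; rw [le_div_iff₀ hδ]; linarith
    _ ≤ ∑ j ∈ T, phi ((v j - c) / δ) :=
        Finset.single_le_sum (f := fun j => phi ((v j - c) / δ)) (fun j _ => phi_nonneg _) hi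

lemma bump_eq_zero {d : ℕ} (T : Finset (Fin d)) (c δ : ℝ) (hδ : 0 < δ) (v : Fin d → ℝ)
    (hv : ∀ i ∈ T, v i ≤ c) : bump d T c δ v = 0 := by
  rw [bump_apply]
  have : ∑ j ∈ T, phi ((v j - c) / δ) = 0 :=
    Finset.sum_eq_zero fun j hj => phi_eq_zero _ (div_nonpos_iff.2 (Or.inr
      ⟨by linarith [hv j hj], hδ.le⟩))
  rw [this]; simp

lemma bump_pos_exists {d : ℕ} (T : Finset (Fin d)) (c δ : ℝ) (hδ : 0 < δ) (v : Fin d → ℝ)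
    (hv : 0 < bump d T c δ v) : ∃ i ∈ T, c < v i := by
  by_contra h
  push_neg at h
  rw [bump_eq_zero T c δ hδ v h] at hv; exact lt_irrefl 0 hv

variable {Ω : Type*} [MeasurableSpace Ω]


def blockMax' (X : ℤ → Ω → ℝ) (a b : ℤ) (ω : Ω) : ℝ :=
  ⨆ i : Finset.Icc a b, X i ω

lemma le_blockMax' (X : ℤ → Ω → ℝ) {a b t : ℤ} (ht : a ≤ t) (ht' : t ≤ b) (ω : Ω) :
    X t ω ≤ blockMax' X a b ω :=
  le_ciSup (f := fun i : Finset.Icc a b => X i ω)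
    (Set.Finite.bddAbove (Set.finite_range _)) ⟨t, Finset.mem_Icc.2 ⟨ht, ht'⟩⟩

/-- Markov-type bound: if `F` is a.e.-strongly measurable with values in `[0,1]`
and `F = 1` on `B`, then `ν B ≤ ∫ F`. -/
lemma meas_le_integral {ν : Measure Ω} [IsProbabilityMeasure ν] {F : Ω → ℝ}
    (hF : AEStronglyMeasurable F ν) (h0 : ∀ ω, 0 ≤ F ω) (h1 : ∀ ω, F ω ≤ 1)
    {B : Set Ω} (hB : ∀ ω ∈ B, F ω = 1) : (ν B).toReal ≤ ∫ ω, F ω ∂ν := by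
  set g := hF.mk F with hgdef
  have hg : F =ᵐ[ν] g := hF.ae_eq_mk
  have hgm : Measurable g := hF.stronglyMeasurable_mk.measurable
  set A : Set Ω := {ω | 1 ≤ g ω} with hA
  have hAm : MeasurableSet A := measurableSet_le measurable_const hgm
  have hintF : Integrable F ν := by
    refine ⟨hF, HasFiniteIntegral.of_bounded (C := 1) (ae_of_all _ fun ω => ?_)⟩
    rw [Real.norm_eq_abs, abs_le]; exact ⟨by linarith [h0 ω], h1 ω⟩
  have hintg : Integrable g ν := hintF.congr hg
  have hBA : ν B ≤ ν A := by
    have : B ⊆ A ∪ {ω | F ω ≠ g ω} := by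
      intro ω hω
      by_cases he : F ω = g ω
      · exact Or.inl (by simp only [hA, Set.mem_setOf_eq, ← he, hB ω hω, le_refl])
      · exact Or.inr he
    calc ν B ≤ ν (A ∪ {ω | F ω ≠ g ω}) := measure_mono this
      _ ≤ ν A + ν {ω | F ω ≠ g ω} := measure_union_le _ _
      _ = ν A := by rw [ae_iff.1 hg, add_zero]
  have hind : ∫ ω, A.indicator (fun _ => (1:ℝ)) ω ∂ν = (ν A).toReal := by
    rw [integral_indicator_const _ hAm]; simp [measureReal_def]
  have hmono : ∫ ω, A.indicator (fun _ => (1:ℝ)) ω ∂ν ≤ ∫ ω, g ω ∂ν := by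
    refine integral_mono_ae ((integrable_const (1:ℝ)).indicator hAm) hintg ?_
    filter_upwards [hg] with ω hω
    by_cases hωA : ω ∈ A
    · rw [Set.indicator_of_mem hωA]; exact hωA
    · rw [Set.indicator_of_notMem hωA, ← hω]; exact h0 ω
  have : (ν B).toReal ≤ (ν A).toReal :=
    ENNReal.toReal_mono (measure_ne_top _ _) hBA
  calc (ν B).toReal ≤ (ν A).toReal := this
    _ ≤ ∫ ω, g ω ∂ν := by rw [← hind]; exact hmono
    _ = ∫ ω, F ω ∂ν := (integral_congr_ae hg).symm

lemma cond_le_one (μ : Measure Ω) [IsProbabilityMeasure μ] (A B : Set Ω) :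
    ProbabilityTheory.cond μ A B ≤ 1 := by
  rw [ProbabilityTheory.cond, Measure.smul_apply, smul_eq_mul]
  calc (μ A)⁻¹ * μ.restrict A B ≤ (μ A)⁻¹ * μ A :=
        mul_le_mul_right ((measure_mono (Set.subset_univ B)).trans_eq
          (Measure.restrict_apply_univ A)) _
    _ ≤ 1 := ENNReal.inv_mul_le_one _

end MyAux

section AuxFdd

variable {Ω : Type*} [MeasurableSpace Ω] {Ω' : Type*} [MeasurableSpace Ω']

lemma comp_measurable (X : ℤ → Ω → ℝ) (hmeas : ∀ t, Measurable (X t)) (h : ℕ)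
    (f : BoundedContinuousFunction (Fin (2 * h + 1) → ℝ) ℝ) (x : ℝ) :
    Measurable (fun ω => f (fun i : Fin (2 * h + 1) => X (((i : ℕ) : ℤ) - (h : ℤ)) ω / x)) :=
  f.continuous.measurable.comp
    (measurable_pi_lambda _ fun i => (hmeas (((i : ℕ) : ℤ) - (h : ℤ))).div_const x)

lemma comp_integrable (X : ℤ → Ω → ℝ) (hmeas : ∀ t, Measurable (X t)) (h : ℕ)
    (f : BoundedContinuousFunction (Fin (2 * h + 1) → ℝ) ℝ) (x : ℝ)
    (P : Measure Ω) [IsFiniteMeasure P] :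
    Integrable (fun ω => f (fun i : Fin (2 * h + 1) => X (((i : ℕ) : ℤ) - (h : ℤ)) ω / x)) P :=
  ⟨(comp_measurable X hmeas h f x).aestronglyMeasurable,
   HasFiniteIntegral.of_bounded (C := ‖f‖)
     (ae_of_all _ fun ω => f.norm_coe_le_norm _)⟩

lemma cond_zero_of_meas_zero {μ : Measure Ω} {A : Set Ω} (hA : μ A = 0) :
    ProbabilityTheory.cond μ A = 0 := by
  rw [ProbabilityTheory.cond, Measure.restrict_eq_zero.2 hA, smul_zero]

lemma tail_pos (μ : Measure Ω) [IsProbabilityMeasure μ] (ν : Measure Ω')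
    [IsProbabilityMeasure ν] (X : ℤ → Ω → ℝ) (α : ℝ) (Θ : ℤ → Ω' → ℝ) (Y : Ω' → ℝ)
    (hrv : IsSpectralTail μ ν X α Θ Y) :
    ∀ᶠ x : ℝ in atTop, μ {ω | |X 0 ω| > x} ≠ 0 := by
  have h1 := hrv.fdd_conv 0 (BoundedContinuousFunction.const _ (1 : ℝ))
  simp only [BoundedContinuousFunction.const_apply, integral_const, measure_univ,
    probReal_univ, smul_eq_mul, mul_one, one_smul] at h1
  filter_upwards [h1.eventually (lt_mem_nhds (show (0:ℝ) < 1 by norm_num))] with x hx hA0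
  rw [cond_zero_of_meas_zero hA0] at hx
  simp at hx

/-- the a.e.-strong-measurability trick: the composition of a bounded continuous function
with the (possibly non-measurable) tail process must be a.e. strongly measurable,
since otherwise the junk value `0` of the Bochner integral contradicts `fdd_conv`. -/
lemma aesm_comp (μ : Measure Ω) [IsProbabilityMeasure μ] (ν : Measure Ω')
    [IsProbabilityMeasure ν] (X : ℤ → Ω → ℝ) (hmeas : ∀ t, Measurable (X t))
    (α : ℝ) (Θ : ℤ → Ω' → ℝ) (Y : Ω' → ℝ)
    (hrv : IsSpectralTail μ ν X α Θ Y) (h : ℕ)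
    (f : BoundedContinuousFunction (Fin (2 * h + 1) → ℝ) ℝ) :
    AEStronglyMeasurable
      (fun ω => f (fun i : Fin (2 * h + 1) => Y ω * Θ (((i : ℕ) : ℤ) - (h : ℤ)) ω)) ν := by
  by_contra hc
  -- the integral of f ∘ G is junk 0
  have hf := hrv.fdd_conv h f
  have hI : (∫ ω, f (fun i : Fin (2 * h + 1) => Y ω * Θ (((i : ℕ) : ℤ) - (h : ℤ)) ω) ∂ν) = 0 :=
    integral_undef (fun hint => hc hint.1)
  -- same for (f + 1) ∘ G
  set fc := f + BoundedContinuousFunction.const _ (1 : ℝ) with hfc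
  have hfc_apply : ∀ v, fc v = f v + 1 := fun v => rfl
  have hIc : (∫ ω, fc (fun i : Fin (2 * h + 1) => Y ω * Θ (((i : ℕ) : ℤ) - (h : ℤ)) ω) ∂ν) = 0 := by
    refine integral_undef (fun hint => hc ?_)
    have := hint.1
    simp only [hfc_apply] at this
    have h2 := this.sub (aestronglyMeasurable_const (b := (1:ℝ)))
    refine h2.congr (ae_of_all _ fun ω => ?_)
    simp
  have hgc := hrv.fdd_conv h fc
  rw [hIc] at hgc
  -- but the left-hand side of the fdd limit for f + 1 tends to 1
  have hone : Tendsto (fun x : ℝ =>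
      ∫ ω, fc (fun i : Fin (2 * h + 1) => X (((i : ℕ) : ℤ) - (h : ℤ)) ω / x)
        ∂(ProbabilityTheory.cond μ {ω | |X 0 ω| > x})) atTop (𝓝 1) := by
    have hev : ∀ᶠ x : ℝ in atTop,
        (∫ ω, fc (fun i : Fin (2 * h + 1) => X (((i : ℕ) : ℤ) - (h : ℤ)) ω / x)
          ∂(ProbabilityTheory.cond μ {ω | |X 0 ω| > x}))
        = (∫ ω, f (fun i : Fin (2 * h + 1) => X (((i : ℕ) : ℤ) - (h : ℤ)) ω / x)
          ∂(ProbabilityTheory.cond μ {ω | |X 0 ω| > x})) + 1 := by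
      filter_upwards [tail_pos μ ν X α Θ Y hrv] with x hx
      haveI : IsProbabilityMeasure (ProbabilityTheory.cond μ {ω | |X 0 ω| > x}) :=
        ProbabilityTheory.cond_isProbabilityMeasure hx
      simp only [hfc_apply]
      rw [integral_add (comp_integrable X hmeas h f x _) (integrable_const 1)]
      simp
    rw [hI] at hf
    have h3 := hf.add (tendsto_const_nhds (x := (1:ℝ)) (f := atTop))
    rw [zero_add] at h3
    exact Tendsto.congr' (hev.mono fun x hx => hx.symm) h3
  have := tendsto_nhds_unique hgc hone
  norm_num at this

end AuxFdd


section AuxBumpNeg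

lemma mem_Icc01_phi (s : ℝ) : phi s ∈ Set.Icc (0:ℝ) 1 := ⟨phi_nonneg s, phi_le_one s⟩

/-- one-coordinate negative bump: 1 if `v i0 ≤ -δ`, 0 if `v i0 ≥ -δ/2`. -/
def bumpNeg (d : ℕ) (i0 : Fin d) (δ : ℝ) : BoundedContinuousFunction (Fin d → ℝ) ℝ :=
  ⟨⟨fun v => phi ((-(v i0) - δ/2)/(δ/2)),
    phi_continuous.comp (((continuous_apply i0).neg.sub continuous_const).div_const _)⟩,
   ⟨1, fun v w => Real.dist_le_of_mem_Icc_01 (mem_Icc01_phi _) (mem_Icc01_phi _)⟩⟩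

lemma bumpNeg_apply {d : ℕ} (i0 : Fin d) (δ : ℝ) (v : Fin d → ℝ) :
    bumpNeg d i0 δ v = phi ((-(v i0) - δ/2)/(δ/2)) := rfl

lemma bumpNeg_nonneg {d : ℕ} (i0 : Fin d) (δ : ℝ) (v : Fin d → ℝ) :
    0 ≤ bumpNeg d i0 δ v := phi_nonneg _

lemma bumpNeg_le_one {d : ℕ} (i0 : Fin d) (δ : ℝ) (v : Fin d → ℝ) :
    bumpNeg d i0 δ v ≤ 1 := phi_le_one _

lemma bumpNeg_eq_one {d : ℕ} (i0 : Fin d) (δ : ℝ) (hδ : 0 < δ) (v : Fin d → ℝ)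
    (hv : v i0 ≤ -δ) : bumpNeg d i0 δ v = 1 := by
  rw [bumpNeg_apply]
  exact phi_eq_one _ (by rw [le_div_iff₀ (by linarith)]; linarith)

lemma bumpNeg_eq_zero {d : ℕ} (i0 : Fin d) (δ : ℝ) (hδ : 0 < δ) (v : Fin d → ℝ)
    (hv : 0 ≤ v i0) : bumpNeg d i0 δ v = 0 := by
  rw [bumpNeg_apply]
  exact phi_eq_zero _ (div_nonpos_iff.2 (Or.inr ⟨by linarith, by linarith⟩))

end AuxBumpNeg


/-- Lemma, forward part: for a non-negative stationary regularly varying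
sequence satisfying the anti-clustering condition with `u_n = x a_n` for all `x > 0`,
`Y_t = Y Θ_t → 0` a.s. and `Θ_t → 0` a.s. as `t → +∞`. -/
theorem tail_process_tendsto_zero_forward
    (μ : Measure Ω) [IsProbabilityMeasure μ]
    {Ω' : Type*} [MeasurableSpace Ω'] (ν : Measure Ω') [IsProbabilityMeasure ν]
    (X : ℤ → Ω → ℝ) (hmeas : ∀ t, Measurable (X t)) (hpos : ∀ t ω, 0 ≤ X t ω)
    (hstat : IsStationarySeq μ X)
    (α : ℝ) (Θ : ℤ → Ω' → ℝ) (Y : Ω' → ℝ)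
    (hrv : IsSpectralTail μ ν X α Θ Y)
    (a : ℕ → ℝ)
    (ha : Tendsto (fun n : ℕ => (n : ℝ) * (μ {ω | |X 0 ω| > a n}).toReal) atTop (𝓝 1))
    (r : ℕ → ℕ) (hr : Tendsto r atTop atTop)
    (hk : Tendsto (fun n => n / r n) atTop atTop)
    (hAC : ∀ x : ℝ, 0 < x → AntiClustering μ X (fun n => x * a n) r) :
    (∀ᵐ ω ∂ν, Tendsto (fun t : ℕ => Y ω * Θ (t : ℤ) ω) atTop (𝓝 0)) ∧
    (∀ᵐ ω ∂ν, Tendsto (fun t : ℕ => Θ (t : ℤ) ω) atTop (𝓝 0)) := by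
  clear hstat hk
  -- the marginal tail is positive at every level
  have hTpos := tail_pos μ ν X α Θ Y hrv
  have hTail : ∀ s : ℝ, μ {ω | |X 0 ω| > s} ≠ 0 := by
    intro s
    obtain ⟨x0, hx0⟩ := eventually_atTop.1 hTpos
    intro hzero
    exact hx0 (max s x0) (le_max_right _ _)
      (measure_mono_null (fun ω hω => lt_of_le_of_lt (le_max_left s x0) hω) hzero)
  -- `a n → ∞`
  have ha_top : Tendsto a atTop atTop := by
    rw [tendsto_atTop]
    intro C
    have hc : 0 < (μ {ω | |X 0 ω| > C}).toReal :=
      ENNReal.toReal_pos (hTail C) (measure_ne_top μ _)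
    set c := (μ {ω | |X 0 ω| > C}).toReal with hcdef
    filter_upwards [ha.eventually (Iio_mem_nhds (show (1:ℝ) < 2 by norm_num)),
      eventually_gt_atTop ⌈2/c⌉₊] with n h2 hn
    by_contra hC
    push_neg at hC
    have hsub : {ω | |X 0 ω| > C} ⊆ {ω | |X 0 ω| > a n} := fun ω hω => hC.trans hω
    have hcp : c ≤ (μ {ω | |X 0 ω| > a n}).toReal :=
      ENNReal.toReal_mono (measure_ne_top μ _) (measure_mono hsub)
    have h2c : 2 / c < (n : ℝ) :=
      lt_of_le_of_lt (Nat.le_ceil (2/c)) (by exact_mod_cast hn)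
    have h2c' : 2 < (n : ℝ) * c := (div_lt_iff₀ hc).1 h2c
    have hmul : (n : ℝ) * c ≤ (n : ℝ) * (μ {ω | |X 0 ω| > a n}).toReal :=
      mul_le_mul_of_nonneg_left hcp (Nat.cast_nonneg n)
    have : (n : ℝ) * (μ {ω | |X 0 ω| > a n}).toReal < 2 := h2
    linarith
  have haApos : ∀ᶠ n : ℕ in atTop, 0 < a n := ha_top.eventually (eventually_gt_atTop 0)
  have haAne : ∀ᶠ n : ℕ in atTop, μ {ω | |X 0 ω| > a n} ≠ 0 := ha_top.eventually hTpos
  have hAset : ∀ n, {ω | X 0 ω > 1 * a n} = {ω | |X 0 ω| > a n} := by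
    intro n; ext ω; simp [abs_of_nonneg (hpos 0 ω)]
  set L : ℕ → ℝ := fun k =>
    limsup (fun n : ℕ =>
      condProb μ {ω | X 0 ω > 1 * a n} {ω | blockMax X k (r n) ω > 1 * a n}) atTop with hLdef
  have hL0 : Tendsto L atTop (𝓝 0) := hAC 1 one_pos
  have hq0 : ∀ k n : ℕ,
      0 ≤ condProb μ {ω | X 0 ω > 1 * a n} {ω | blockMax X (k : ℤ) ((r n : ℕ) : ℤ) ω > 1 * a n} :=
    fun k n => ENNReal.toReal_nonneg
  have hq1 : ∀ k n : ℕ,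
      condProb μ {ω | X 0 ω > 1 * a n} {ω | blockMax X (k : ℤ) ((r n : ℕ) : ℤ) ω > 1 * a n} ≤ 1 := by
    intro k n
    unfold condProb
    calc (ProbabilityTheory.cond μ {ω | X 0 ω > 1 * a n}
          {ω | blockMax X (k : ℤ) ((r n : ℕ) : ℤ) ω > 1 * a n}).toReal
        ≤ (1 : ENNReal).toReal := ENNReal.toReal_mono ENNReal.one_ne_top (cond_le_one μ _ _)
      _ = 1 := ENNReal.toReal_one
  have hL_nonneg : ∀ k, 0 ≤ L k := fun k =>
    le_limsup_of_frequently_le (Frequently.of_forall fun n => hq0 k n)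
      (isBoundedUnder_of ⟨1, fun n => hq1 k n⟩)
  -- main estimate
  have hmain : ∀ k i : ℕ,
      (ν {ω' | ∃ t : ℕ, k ≤ t ∧ t ≤ k + i ∧
          1 + 1/((i:ℝ)+1) ≤ Y ω' * Θ (t : ℤ) ω'}).toReal ≤ L k := by
    intro k i
    set m := k + i with hm
    set δ : ℝ := 1/((i:ℝ)+1) with hδdef
    have hδ : 0 < δ := by positivity
    set T : Finset (Fin (2*m+1)) :=
      Finset.univ.filter (fun j : Fin (2*m+1) => (k:ℤ) ≤ ((j:ℕ):ℤ) - (m:ℤ)) with hT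
    set f := bump (2*m+1) T 1 δ with hfdef
    have hAESM := aesm_comp μ ν X hmeas α Θ Y hrv m f
    have hconv := hrv.fdd_conv m f
    set I := ∫ ω, f (fun j : Fin (2*m+1) => Y ω * Θ (((j:ℕ):ℤ) - (m:ℤ)) ω) ∂ν with hIdef
    have hstep1 : (ν {ω' | ∃ t : ℕ, k ≤ t ∧ t ≤ k + i ∧
        1 + δ ≤ Y ω' * Θ (t : ℤ) ω'}).toReal ≤ I := by
      refine meas_le_integral hAESM (fun ω => bump_nonneg _ _ _ _)
        (fun ω => bump_le_one _ _ _ _) ?_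
      rintro ω ⟨t, htk, htm, hty⟩
      have hidx : t + m < 2*m+1 := by omega
      set j : Fin (2*m+1) := ⟨t + m, hidx⟩ with hj
      have hcast : ((j:ℕ):ℤ) - (m:ℤ) = (t:ℤ) := by
        simp only [hj]
        push_cast
        ring
      have hjT : j ∈ T := by
        rw [hT, Finset.mem_filter]
        exact ⟨Finset.mem_univ _, by rw [hcast]; exact_mod_cast htk⟩
      refine bump_eq_one T 1 δ hδ _ hjT ?_
      show 1 + δ ≤ Y ω * Θ (((j:ℕ):ℤ) - (m:ℤ)) ω
      rw [hcast]
      exact hty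
    have hstep2 : I ≤ L k := by
      have hseq : Tendsto (fun n : ℕ =>
          ∫ ω, f (fun j : Fin (2*m+1) => X (((j:ℕ):ℤ) - (m:ℤ)) ω / a n)
            ∂(ProbabilityTheory.cond μ {ω | |X 0 ω| > a n})) atTop (𝓝 I) := hconv.comp ha_top
      have hFnonneg : ∀ n : ℕ, 0 ≤
          ∫ ω, f (fun j : Fin (2*m+1) => X (((j:ℕ):ℤ) - (m:ℤ)) ω / a n)
            ∂(ProbabilityTheory.cond μ {ω | |X 0 ω| > a n}) :=
        fun n => integral_nonneg (fun ω => bump_nonneg _ _ _ _)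
      have hev : ∀ᶠ n : ℕ in atTop,
          (∫ ω, f (fun j : Fin (2*m+1) => X (((j:ℕ):ℤ) - (m:ℤ)) ω / a n)
            ∂(ProbabilityTheory.cond μ {ω | |X 0 ω| > a n}))
          ≤ condProb μ {ω | X 0 ω > 1 * a n}
              {ω | blockMax X (k : ℤ) ((r n : ℕ) : ℤ) ω > 1 * a n} := by
        filter_upwards [haApos, haAne, hr.eventually (eventually_ge_atTop m)]
          with n hapos hane hrn
        haveI := ProbabilityTheory.cond_isProbabilityMeasure (μ := μ) hane
        set P := ProbabilityTheory.cond μ {ω | |X 0 ω| > a n} with hP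
        set V : Set Ω := ⋃ t ∈ Finset.Icc (k:ℤ) (m:ℤ), {ω | a n < X t ω} with hV
        have hVm : MeasurableSet V :=
          (Finset.Icc (k:ℤ) (m:ℤ)).measurableSet_biUnion
            (fun t _ => measurableSet_lt measurable_const (hmeas t))
        have hle : ∀ ω, f (fun j : Fin (2*m+1) => X (((j:ℕ):ℤ) - (m:ℤ)) ω / a n)
            ≤ V.indicator (fun _ => (1:ℝ)) ω := by
          intro ω
          by_cases hω : ω ∈ V
          · rw [Set.indicator_of_mem hω]; exact bump_le_one _ _ _ _
          · rw [Set.indicator_of_notMem hω]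
            by_contra hcon
            push_neg at hcon
            obtain ⟨j, hjT, hjv⟩ := bump_pos_exists T 1 δ hδ _ hcon
            apply hω
            have hkj : (k:ℤ) ≤ ((j:ℕ):ℤ) - (m:ℤ) := (Finset.mem_filter.1 hjT).2
            have hjlt : (j:ℕ) < 2*m+1 := j.isLt
            have hjm : ((j:ℕ):ℤ) - (m:ℤ) ≤ (m:ℤ) := by omega
            have hXgt : a n < X (((j:ℕ):ℤ) - (m:ℤ)) ω := by
              have := (one_lt_div hapos).1 hjv
              linarith
            exact Set.mem_biUnion (Finset.mem_Icc.2 ⟨hkj, hjm⟩) hXgt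
        have hint : (∫ ω, f (fun j : Fin (2*m+1) => X (((j:ℕ):ℤ) - (m:ℤ)) ω / a n) ∂P)
            ≤ (P V).toReal := by
          have hmono := integral_mono (μ := P)
            (comp_integrable X hmeas m f (a n) P)
            ((integrable_const (1:ℝ)).indicator hVm) hle
          rwa [integral_indicator_const _ hVm, smul_eq_mul, mul_one] at hmono
        have hVW : V ⊆ {ω | blockMax X (k : ℤ) ((r n : ℕ) : ℤ) ω > 1 * a n} := by
          intro ω hω
          simp only [hV, Set.mem_iUnion, Set.mem_setOf_eq, exists_prop] at hω
          obtain ⟨t, htmem, hXt⟩ := hω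
          obtain ⟨ht1, ht2⟩ := Finset.mem_Icc.1 htmem
          have ht3 : t ≤ ((r n : ℕ) : ℤ) := le_trans ht2 (by exact_mod_cast hrn)
          show 1 * a n < blockMax X (k : ℤ) ((r n : ℕ) : ℤ) ω
          rw [one_mul]
          exact lt_of_lt_of_le hXt (le_blockMax' X ht1 ht3 ω)
        have hPV : (P V).toReal ≤ condProb μ {ω | X 0 ω > 1 * a n}
            {ω | blockMax X (k : ℤ) ((r n : ℕ) : ℤ) ω > 1 * a n} := by
          unfold condProb
          rw [hAset n]
          refine ENNReal.toReal_mono ?_ (measure_mono hVW)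
          exact ((cond_le_one μ _ _).trans_lt ENNReal.one_lt_top).ne
        exact hint.trans hPV
      calc I = limsup (fun n : ℕ =>
            ∫ ω, f (fun j : Fin (2*m+1) => X (((j:ℕ):ℤ) - (m:ℤ)) ω / a n)
              ∂(ProbabilityTheory.cond μ {ω | |X 0 ω| > a n})) atTop := hseq.limsup_eq.symm
        _ ≤ L k := limsup_le_limsup hev
            (isCoboundedUnder_le_of_le atTop hFnonneg)
            (isBoundedUnder_of ⟨1, fun n => hq1 k n⟩)
    exact hstep1.trans hstep2
  -- the decreasing events `S k` and their null intersection `N`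
  set S : ℕ → Set Ω' := fun k => {ω' | ∃ t : ℕ, k ≤ t ∧ 1 < Y ω' * Θ (t : ℤ) ω'} with hSdef
  have hSC : ∀ k, ν (S k) ≤ ENNReal.ofReal (L k) := by
    intro k
    set C : ℕ → Set Ω' := fun i =>
      {ω' | ∃ t : ℕ, k ≤ t ∧ t ≤ k + i ∧ 1 + 1/((i:ℝ)+1) ≤ Y ω' * Θ (t : ℤ) ω'} with hC
    have hmono : Monotone C := by
      refine monotone_nat_of_le_succ fun i => ?_
      rintro ω' ⟨t, h1, h2, h3⟩
      refine ⟨t, h1, by omega, le_trans ?_ h3⟩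
      have : 1/(((i:ℝ)+1)+1) ≤ 1/((i:ℝ)+1) :=
        one_div_le_one_div_of_le (by positivity) (by linarith)
      push_cast
      linarith
    have hunion : S k = ⋃ i, C i := by
      ext ω'
      simp only [hSdef, hC, Set.mem_setOf_eq, Set.mem_iUnion]
      constructor
      · rintro ⟨t, htk, hty⟩
        obtain ⟨n0, hn0⟩ := exists_nat_one_div_lt
          (show 0 < Y ω' * Θ (t : ℤ) ω' - 1 by linarith)
        refine ⟨max (t - k) n0, t, htk, by omega, ?_⟩
        have hcast : ((n0:ℝ)+1) ≤ ((max (t-k) n0 : ℕ):ℝ)+1 :=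
          add_le_add_left (by exact_mod_cast le_max_right (t-k) n0) 1
        have := one_div_le_one_div_of_le (by positivity : (0:ℝ) < (n0:ℝ)+1) hcast
        linarith
      · rintro ⟨i, t, htk, _, hty⟩
        have : (0:ℝ) < 1/((i:ℝ)+1) := by positivity
        exact ⟨t, htk, by linarith⟩
    rw [hunion, hmono.measure_iUnion]
    refine iSup_le fun i => ?_
    exact (ENNReal.le_ofReal_iff_toReal_le (measure_ne_top ν _) (hL_nonneg k)).2 (hmain k i)
  set N : Set Ω' := ⋂ k, S k with hN
  have hNnull : ν N = 0 := by
    have hle : ∀ k, ν N ≤ ENNReal.ofReal (L k) := fun k =>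
      (measure_mono (Set.iInter_subset S k)).trans (hSC k)
    have htend : Tendsto (fun k => ENNReal.ofReal (L k)) atTop (𝓝 0) := by
      simpa using ENNReal.tendsto_ofReal hL0
    exact le_antisymm (ge_of_tendsto' htend hle) (by positivity)
  -- negative values are null
  have hneg : ∀ t j : ℕ, ν {ω' | Y ω' * Θ (t : ℤ) ω' ≤ -(1/((j:ℝ)+1))} = 0 := by
    intro t j
    set δ : ℝ := 1/((j:ℝ)+1) with hδdef
    have hδ : 0 < δ := by positivity
    have hidx : 2*t < 2*t+1 := by omega
    set i0 : Fin (2*t+1) := ⟨2*t, hidx⟩ with hi0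
    have hcast : ((i0:ℕ):ℤ) - (t:ℤ) = (t:ℤ) := by
      simp only [hi0]
      push_cast
      ring
    set f := bumpNeg (2*t+1) i0 δ with hfdef
    have hAESM := aesm_comp μ ν X hmeas α Θ Y hrv t f
    have hconv := hrv.fdd_conv t f
    have hzero : ∀ᶠ x : ℝ in atTop,
        (∫ ω, f (fun i : Fin (2*t+1) => X (((i:ℕ):ℤ) - (t:ℤ)) ω / x)
          ∂(ProbabilityTheory.cond μ {ω | |X 0 ω| > x})) = 0 := by
      filter_upwards [eventually_gt_atTop (0:ℝ)] with x hx
      have hz : ∀ ω, f (fun i : Fin (2*t+1) => X (((i:ℕ):ℤ) - (t:ℤ)) ω / x) = 0 :=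
        fun ω => bumpNeg_eq_zero _ _ hδ _ (div_nonneg (hpos _ ω) hx.le)
      simp only [hz, integral_zero]
    have hI0 : (∫ ω, f (fun i : Fin (2*t+1) => Y ω * Θ (((i:ℕ):ℤ) - (t:ℤ)) ω) ∂ν) = 0 :=
      tendsto_nhds_unique hconv ((tendsto_congr' hzero).2 tendsto_const_nhds)
    have hb : (ν {ω' | Y ω' * Θ (t : ℤ) ω' ≤ -(1/((j:ℝ)+1))}).toReal ≤ 0 := by
      rw [← hI0]
      refine meas_le_integral hAESM (fun ω => bumpNeg_nonneg _ _ _)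
        (fun ω => bumpNeg_le_one _ _ _) ?_
      intro ω' hω'
      refine bumpNeg_eq_one _ _ hδ _ ?_
      show Y ω' * Θ (((i0:ℕ):ℤ) - (t:ℤ)) ω' ≤ -δ
      rw [hcast]
      exact hω'
    have heq : (ν {ω' | Y ω' * Θ (t : ℤ) ω' ≤ -(1/((j:ℝ)+1))}).toReal = 0 :=
      le_antisymm hb ENNReal.toReal_nonneg
    rw [ENNReal.toReal_eq_zero_iff] at heq
    exact heq.resolve_right (measure_ne_top ν _)
  -- the "frequently large Θ" events are null, by independence
  have hBad : ∀ j : ℕ, ν ((fun ω' (s : ℤ) => Θ s ω') ⁻¹'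
      {g : ℤ → ℝ | ∀ k : ℕ, ∃ t : ℕ, k ≤ t ∧ 1/((j:ℝ)+1) < g (t : ℤ)}) = 0 := by
    intro j
    set c : ℝ := 1/((j:ℝ)+1) with hc
    have hcpos : 0 < c := by positivity
    have hcle : c ≤ 1 := by
      rw [hc]
      rw [div_le_one (by positivity)]
      have : (0:ℝ) ≤ (j:ℝ) := Nat.cast_nonneg j
      linarith
    set Tset : Set (ℤ → ℝ) := {g | ∀ k : ℕ, ∃ t : ℕ, k ≤ t ∧ c < g (t : ℤ)} with hTset
    have hTm : MeasurableSet Tset := by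
      have hTeq : Tset = ⋂ k : ℕ, ⋃ t : ℕ, ⋃ (_ : k ≤ t), {g : ℤ → ℝ | c < g (t : ℤ)} := by
        ext g
        simp [hTset]
      rw [hTeq]
      exact MeasurableSet.iInter fun k => MeasurableSet.iUnion fun t =>
        MeasurableSet.iUnion fun _ =>
          measurableSet_lt measurable_const (measurable_pi_apply _)
    set y : ℝ := 2/c with hy
    have hy1 : 1 < y := by
      rw [hy]
      rw [lt_div_iff₀ hcpos]
      linarith
    have hyc : y * c = 2 := by
      rw [hy]; field_simp
    have hprod := hrv.indep.measure_inter_preimage_eq_mul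
      (s := Set.Ioi y) (t := Tset) measurableSet_Ioi hTm
    have hsub : Y ⁻¹' (Set.Ioi y) ∩ (fun ω' (s : ℤ) => Θ s ω') ⁻¹' Tset ⊆ N := by
      rintro ω' ⟨hY, hT⟩
      simp only [hN, Set.mem_iInter]
      intro k
      obtain ⟨t, htk, hgt⟩ := hT k
      refine ⟨t, htk, ?_⟩
      have hY' : y < Y ω' := hY
      have hYpos : 0 < Y ω' := lt_trans (by linarith) hY'
      calc (1:ℝ) < 2 := one_lt_two
        _ = y * c := hyc.symm
        _ < Y ω' * c := mul_lt_mul_of_pos_right hY' hcpos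
        _ < Y ω' * Θ (t : ℤ) ω' := mul_lt_mul_of_pos_left hgt hYpos
    have h0 : ν (Y ⁻¹' (Set.Ioi y) ∩ (fun ω' (s : ℤ) => Θ s ω') ⁻¹' Tset) = 0 :=
      le_antisymm ((measure_mono hsub).trans hNnull.le) (by positivity)
    have hprod0 : ν (Y ⁻¹' (Set.Ioi y)) * ν ((fun ω' (s : ℤ) => Θ s ω') ⁻¹' Tset) = 0 :=
      hprod.symm.trans h0
    have hYne : ν (Y ⁻¹' (Set.Ioi y)) ≠ 0 := by
      intro hzero
      have h2 := hrv.pareto_tail y hy1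
      have hset : {ω' | Y ω' > y} = Y ⁻¹' (Set.Ioi y) := rfl
      rw [hset, hzero] at h2
      simp only [ENNReal.toReal_zero] at h2
      have : (0:ℝ) < y ^ (-α) := Real.rpow_pos_of_pos (by linarith) _
      linarith
    exact (mul_eq_zero.1 hprod0).resolve_left hYne
  -- put everything together
  have hae : ∀ᵐ ω' ∂ν, Tendsto (fun t : ℕ => Θ (t : ℤ) ω') atTop (𝓝 0) := by
    have h1 : ∀ᵐ ω' ∂ν, ω' ∉ N := by
      rw [ae_iff]
      simpa [not_not] using hNnull
    have h2 : ∀ᵐ ω' ∂ν, ∀ t j : ℕ, ¬(Y ω' * Θ (t : ℤ) ω' ≤ -(1/((j:ℝ)+1))) := by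
      rw [ae_all_iff]
      intro t
      rw [ae_all_iff]
      intro j
      rw [ae_iff]
      simpa [not_not] using hneg t j
    have h3 : ∀ᵐ ω' ∂ν, ∀ j : ℕ, ω' ∉ (fun ω' (s : ℤ) => Θ s ω') ⁻¹'
        {g : ℤ → ℝ | ∀ k : ℕ, ∃ t : ℕ, k ≤ t ∧ 1/((j:ℝ)+1) < g (t : ℤ)} := by
      rw [ae_all_iff]
      intro j
      rw [ae_iff]
      simpa [not_not] using hBad j
    filter_upwards [h1, h2, h3, hrv.pareto_ge_one] with ω' hω1 hω2 hω3 hω4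
    have hYpos : 0 < Y ω' := lt_of_lt_of_le zero_lt_one hω4
    have hnn : ∀ t : ℕ, 0 ≤ Θ (t : ℤ) ω' := by
      intro t
      by_contra hlt
      push_neg at hlt
      have hYT : Y ω' * Θ (t : ℤ) ω' < 0 := mul_neg_of_pos_of_neg hYpos hlt
      obtain ⟨j, hj⟩ := exists_nat_one_div_lt (show 0 < -(Y ω' * Θ (t : ℤ) ω') by linarith)
      exact hω2 t j (by linarith)
    rw [Metric.tendsto_atTop]
    intro ε hε
    obtain ⟨j, hj⟩ := exists_nat_one_div_lt hε
    have hn3 := hω3 j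
    simp only [Set.mem_preimage, Set.mem_setOf_eq] at hn3
    push_neg at hn3
    obtain ⟨k, hk'⟩ := hn3
    refine ⟨k, fun t ht => ?_⟩
    rw [Real.dist_eq, sub_zero, abs_of_nonneg (hnn t)]
    exact lt_of_le_of_lt (hk' t ht) hj
  refine ⟨?_, hae⟩
  filter_upwards [hae] with ω' hω'
  simpa using hω'.const_mul (Y ω')
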